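/- arXiv:0812.1388 — 3 statements merged into one kernel-verified Lean document; each statement's English description precedes it below -/
import Mathlib

section
/- With the mixture models M_{(K,S)} as defined, for any K₁, K₂ ∈ {1,...,K_max} and any nonempty subsets S₁, S₂ of loci, one has M_{(K₁,S₁)} ∩ M_{(K₂,S₂)} = M_{(min(K₁,K₂), S₁ ∩ S₂)} (interpreting S₁ ∩ S₂ possibly empty by the convention that all loci outside the clustering set have cluster-independent frequencies). -/
open Finset

/-- Hardy–Weinberg genotype probability at a single locus: for an unordered pair
`{a, b}` of alleles with allele-frequency vector `γ`, the probability is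
`(2 - 1[a = b]) * γ a * γ b`. -/
noncomputable def hwProb {A : ℕ} (γ : Fin A → ℝ) : Sym2 (Fin A) → ℝ :=
  Sym2.lift ⟨fun a b => (if a = b then 1 else 2) * (γ a * γ b), by
    intro a b
    rcases eq_or_ne a b with h | h
    · simp [h]
    · simp only [if_neg h, if_neg h.symm]
      ring⟩

/-- A full multilocus genotype: an unordered pair of alleles at each of the `L` loci. -/
def Genotype (L : ℕ) (A : Fin L → ℕ) : Type := ∀ l : Fin L, Sym2 (Fin (A l))

/-- The mixture probability `P_{(K,S)}(x | θ)` with parameters `θ = (π, α, β)`. -/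
noncomputable def mixtureProb {L : ℕ} (A : Fin L → ℕ) (K : ℕ) (S : Finset (Fin L))
    (π : Fin K → ℝ) (α : Fin K → ∀ l : Fin L, Fin (A l) → ℝ)
    (β : ∀ l : Fin L, Fin (A l) → ℝ) (x : Genotype L A) : ℝ :=
  (∑ k, π k * ∏ l ∈ S, hwProb (α k l) (x l)) * ∏ l ∈ Sᶜ, hwProb (β l) (x l)

/-- The model `M_{(K,S)}`: all distributions of the form `P_{(K,S)}(· | θ)` as
`θ = (π, α, β)` ranges over the admissible parameters. -/
noncomputable def Model {L : ℕ} (A : Fin L → ℕ) (K : ℕ) (S : Finset (Fin L)) :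
    Set (Genotype L A → ℝ) :=
  { P | ∃ (π : Fin K → ℝ) (α : Fin K → ∀ l : Fin L, Fin (A l) → ℝ)
      (β : ∀ l : Fin L, Fin (A l) → ℝ),
      (∀ k, 0 < π k) ∧ (∑ k, π k = 1) ∧
      (∀ k l, (∀ j, 0 ≤ α k l j) ∧ ∑ j, α k l j = 1) ∧
      (∀ l, (∀ j, 0 ≤ β l j) ∧ ∑ j, β l j = 1) ∧
      (∀ x, P x = mixtureProb A K S π α β x) }

lemma hwProb_mk {A : ℕ} (γ : Fin A → ℝ) (a b : Fin A) :
    hwProb γ s(a, b) = (if a = b then 1 else 2) * (γ a * γ b) := rfl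

lemma hwProb_sum {A : ℕ} (γ : Fin A → ℝ) :
    ∑ z : Sym2 (Fin A), hwProb γ z = (∑ a, γ a) ^ 2 := by
  have h1 : (∑ a, γ a) ^ 2 = ∑ p : Fin A × Fin A, γ p.1 * γ p.2 := by
    rw [sq, Finset.sum_mul_sum, Fintype.sum_prod_type]
  rw [h1, ← Finset.sum_fiberwise univ (fun p : Fin A × Fin A => Sym2.mk p.1 p.2)
    (fun p : Fin A × Fin A => γ p.1 * γ p.2)]
  refine Fintype.sum_congr _ _ ?_
  intro z
  induction z using Sym2.ind with
  | _ a b =>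
    rcases eq_or_ne a b with rfl | hab
    · have h : ({p : Fin A × Fin A | Sym2.mk p.1 p.2 = s(a, a)} : Finset _) = {(a, a)} := by
        ext p
        simp [Sym2.eq_iff, Prod.ext_iff]
      rw [show (filter (fun p : Fin A × Fin A => Sym2.mk p.1 p.2 = s(a, a)) univ) = {(a, a)} from h]
      simp [hwProb_mk]
    · have h : ({p : Fin A × Fin A | Sym2.mk p.1 p.2 = s(a, b)} : Finset _) = {(a, b), (b, a)} := by
        ext p
        simp [Sym2.eq_iff, Prod.ext_iff]
      rw [show (filter (fun p : Fin A × Fin A => Sym2.mk p.1 p.2 = s(a, b)) univ)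
            = {(a, b), (b, a)} from h]
      rw [Finset.sum_pair (by simp [Prod.ext_iff, hab, hab.symm])]
      simp [hwProb_mk, hab]
      ring

lemma hwProb_sum_one {A : ℕ} {γ : Fin A → ℝ} (h : ∑ j, γ j = 1) :
    ∑ z : Sym2 (Fin A), hwProb γ z = 1 := by
  rw [hwProb_sum, h, one_pow]

instance {L A} : Fintype (Genotype L A) := by unfold Genotype; infer_instance

/-- Marginalization: summing the mixture probability over all genotypes that agree with `x`
on the loci in `T` (and are arbitrary elsewhere) yields the marginal on `T`. -/
lemma marg {L : ℕ} (A : Fin L → ℕ) (K : ℕ) (S : Finset (Fin L))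
    (π : Fin K → ℝ) (α : Fin K → ∀ l : Fin L, Fin (A l) → ℝ)
    (β : ∀ l : Fin L, Fin (A l) → ℝ)
    (hα : ∀ k l, ∑ j, α k l j = 1) (hβ : ∀ l, ∑ j, β l j = 1)
    (T : Finset (Fin L)) (x : Genotype L A) :
    ∑ y ∈ Fintype.piFinset
        (fun l => if l ∈ T then ({x l} : Finset (Sym2 (Fin (A l)))) else univ),
      mixtureProb A K S π α β y
    = (∑ k, π k * ∏ l ∈ S ∩ T, hwProb (α k l) (x l)) *
        ∏ l ∈ T \ S, hwProb (β l) (x l) := by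
  set G : Fin K → ∀ l : Fin L, Sym2 (Fin (A l)) → ℝ :=
    fun k l z => if l ∈ S then hwProb (α k l) z else hwProb (β l) z with hG
  have hmix : ∀ y : Genotype L A,
      mixtureProb A K S π α β y = ∑ k, π k * ∏ l, G k l (y l) := by
    intro y
    rw [mixtureProb, Finset.sum_mul]
    refine Finset.sum_congr rfl fun k _ => ?_
    rw [mul_assoc]
    congr 1
    rw [← Finset.prod_mul_prod_compl S (fun l => G k l (y l))]
    congr 1
    · exact Finset.prod_congr rfl fun l hl => by simp [hG, hl]
    · exact Finset.prod_congr rfl fun l hl => by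
        simp only [Finset.mem_compl] at hl; simp [hG, hl]
  refine (Finset.sum_congr rfl fun y _ => hmix y).trans ?_
  rw [Finset.sum_mul]
  refine Finset.sum_comm.trans (Finset.sum_congr rfl fun k _ => ?_)
  change ∑ y ∈ Fintype.piFinset (fun l => if l ∈ T then ({x l} : Finset (Sym2 (Fin (A l)))) else univ),
      π k * ∏ l, G k l ((y : ∀ l : Fin L, Sym2 (Fin (A l))) l) = _
  rw [← Finset.mul_sum, ← Finset.prod_univ_sum]
  have hcol : ∀ l : Fin L,
      (∑ z ∈ (if l ∈ T then ({x l} : Finset (Sym2 (Fin (A l)))) else univ), G k l z)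
      = if l ∈ T then G k l (x l) else 1 := by
    intro l
    by_cases hl : l ∈ T
    · simp [hl]
    · simp only [hl, if_neg, if_false]
      by_cases hs : l ∈ S
      · simpa [hG, hs] using hwProb_sum_one (hα k l)
      · simpa [hG, hs] using hwProb_sum_one (hβ l)
  calc π k * ∏ l, ∑ z ∈ (if l ∈ T then ({x l} : Finset (Sym2 (Fin (A l)))) else univ), G k l z
      = π k * ∏ l, (if l ∈ T then G k l (x l) else 1) := by
        congr 1; exact Finset.prod_congr rfl fun l _ => hcol l
    _ = π k * ∏ l ∈ T, G k l (x l) := by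
        rw [Finset.prod_ite_mem univ T, Finset.univ_inter]
    _ = π k * ((∏ l ∈ S ∩ T, hwProb (α k l) (x l)) * ∏ l ∈ T \ S, hwProb (β l) (x l)) := by
        congr 1
        rw [show (fun l => G k l (x l))
              = fun l => (if l ∈ S then hwProb (α k l) (x l) else hwProb (β l) (x l)) from rfl]
        rw [Finset.prod_ite]
        congr 1
        · exact Finset.prod_congr (by rw [Finset.filter_mem_eq_inter, Finset.inter_comm])
            fun l _ => rfl
        · exact Finset.prod_congr (Finset.sdiff_eq_filter T S).symm fun l _ => rfl
    _ = (π k * ∏ l ∈ S ∩ T, hwProb (α k l) (x l)) * ∏ l ∈ T \ S, hwProb (β l) (x l) :=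
        (mul_assoc _ _ _).symm

/-- Monotonicity of the models: more clusters and a larger clustering set give a larger model. -/
lemma model_mono {L : ℕ} (A : Fin L → ℕ) {K K' : ℕ} {S S' : Finset (Fin L)}
    (hK : K ≤ K') (hK0 : 1 ≤ K) (hS : S ⊆ S') :
    Model A K S ⊆ Model A K' S' := by
  rintro P ⟨π, α, β, hπ, hπ1, hα, hβ, hP⟩
  set σ : Fin K' → Fin K := fun i => if h : (i : ℕ) < K then ⟨i, h⟩ else ⟨0, hK0⟩ with hσ
  have hc : ∀ k : Fin K, 0 < ({i : Fin K' | σ i = k} : Finset _).card := by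
    intro k
    refine Finset.card_pos.2 ⟨⟨k, lt_of_lt_of_le k.2 hK⟩, ?_⟩
    simp only [Finset.mem_filter, Finset.mem_univ, true_and, hσ]
    simp [k.2]
  set c : Fin K → ℝ := fun k => (({i : Fin K' | σ i = k} : Finset _).card : ℝ) with hcdef
  have hc' : ∀ k, (0 : ℝ) < c k := fun k => by
    simp only [hcdef]
    exact_mod_cast hc k
  refine ⟨fun i => π (σ i) / c (σ i),
    fun i l => if l ∈ S then α (σ i) l else β l, β,
    fun i => div_pos (hπ _) (hc' _), ?_, ?_, hβ, ?_⟩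
  · rw [← Finset.sum_fiberwise univ σ (fun i => π (σ i) / c (σ i))]
    rw [show (1 : ℝ) = ∑ k, π k from hπ1.symm]
    refine Finset.sum_congr rfl fun k _ => ?_
    have : ∀ i ∈ ({i : Fin K' | σ i = k} : Finset _), π (σ i) / c (σ i) = π k / c k := by
      intro i hi
      simp only [Finset.mem_filter] at hi
      rw [hi.2]
    rw [Finset.sum_congr rfl this, Finset.sum_const, nsmul_eq_mul]
    show c k * (π k / c k) = π k
    rw [mul_comm, div_mul_cancel₀ _ (hc' k).ne']
  · intro k l
    by_cases h : l ∈ S <;> simp only [h, if_pos, if_neg, if_true, if_false]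
    · exact hα (σ k) l
    · exact hβ l
  · intro x
    rw [hP x, mixtureProb, mixtureProb]
    have hsplit : ∀ f : Fin L → ℝ, ∏ l ∈ Sᶜ, f l = (∏ l ∈ S' \ S, f l) * ∏ l ∈ S'ᶜ, f l := by
      intro f
      rw [← Finset.prod_union (Finset.disjoint_left.2 fun l hl hl' => by
        simp only [Finset.mem_sdiff] at hl
        exact (Finset.mem_compl.1 hl') hl.1)]
      congr 1
      ext l
      simp only [Finset.mem_compl, Finset.mem_union, Finset.mem_sdiff]
      constructor
      · intro h
        by_cases h' : l ∈ S'
        · exact Or.inl ⟨h', h⟩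
        · exact Or.inr h'
      · rintro (⟨_, h⟩ | h)
        · exact h
        · exact fun hl => h (hS hl)
    have hprod : ∀ i : Fin K',
        ∏ l ∈ S', hwProb (if l ∈ S then α (σ i) l else β l) (x l)
        = (∏ l ∈ S, hwProb (α (σ i) l) (x l)) * ∏ l ∈ S' \ S, hwProb (β l) (x l) := by
      intro i
      rw [← Finset.prod_sdiff hS, mul_comm]
      congr 1
      · exact Finset.prod_congr rfl fun l hl => by simp [hl]
      · exact Finset.prod_congr rfl fun l hl => by
          simp only [Finset.mem_sdiff] at hl
          simp [hl.2]
    refine Eq.symm ?_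
    calc (∑ i, π (σ i) / c (σ i) *
            ∏ l ∈ S', hwProb (if l ∈ S then α (σ i) l else β l) (x l)) *
          ∏ l ∈ S'ᶜ, hwProb (β l) (x l)
        = (∑ i, π (σ i) / c (σ i) * ∏ l ∈ S, hwProb (α (σ i) l) (x l)) *
            ((∏ l ∈ S' \ S, hwProb (β l) (x l)) * ∏ l ∈ S'ᶜ, hwProb (β l) (x l)) := by
          rw [Finset.sum_congr rfl fun i _ => by rw [hprod i, ← mul_assoc],
            ← Finset.sum_mul, mul_assoc]
    _ = (∑ k, π k * ∏ l ∈ S, hwProb (α k l) (x l)) * ∏ l ∈ Sᶜ, hwProb (β l) (x l) := by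
          rw [← hsplit]
          congr 1
          rw [← Finset.sum_fiberwise univ σ
            (fun i => π (σ i) / c (σ i) * ∏ l ∈ S, hwProb (α (σ i) l) (x l))]
          refine Finset.sum_congr rfl fun k _ => ?_
          have h2 : ∀ i ∈ ({i : Fin K' | σ i = k} : Finset _),
              π (σ i) / c (σ i) * ∏ l ∈ S, hwProb (α (σ i) l) (x l)
              = π k / c k * ∏ l ∈ S, hwProb (α k l) (x l) := by
            intro i hi
            simp only [Finset.mem_filter] at hi
            rw [hi.2]
          rw [Finset.sum_congr rfl h2, Finset.sum_const, nsmul_eq_mul]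
          show c k * (π k / c k * ∏ l ∈ S, hwProb (α k l) (x l))
              = π k * ∏ l ∈ S, hwProb (α k l) (x l)
          have hck : c k ≠ 0 := (hc' k).ne'
          field_simp

/-- The hard inclusion: a distribution lying in two models lies in the model with the
first number of clusters and the intersected clustering set. -/
lemma model_inter_subset {L : ℕ} (A : Fin L → ℕ) {K₁ K₂ : ℕ} {S₁ S₂ : Finset (Fin L)}
    {P : Genotype L A → ℝ} (h1 : P ∈ Model A K₁ S₁) (h2 : P ∈ Model A K₂ S₂) :
    P ∈ Model A K₁ (S₁ ∩ S₂) := by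
  obtain ⟨π₁, α₁, β₁, hπ₁, hπ₁s, hα₁, hβ₁, hP₁⟩ := h1
  obtain ⟨π₂, α₂, β₂, hπ₂, hπ₂s, hα₂, hβ₂, hP₂⟩ := h2
  refine ⟨π₁, α₁, fun l => if l ∈ S₁ then β₂ l else β₁ l, hπ₁, hπ₁s, hα₁, ?_, ?_⟩
  · intro l
    by_cases h : l ∈ S₁ <;> simp only [h, if_true, if_false]
    · exact hβ₂ l
    · exact hβ₁ l
  · intro x
    have key : ∀ T : Finset (Fin L),
        (∑ k, π₁ k * ∏ l ∈ S₁ ∩ T, hwProb (α₁ k l) (x l)) *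
            ∏ l ∈ T \ S₁, hwProb (β₁ l) (x l)
        = (∑ m, π₂ m * ∏ l ∈ S₂ ∩ T, hwProb (α₂ m l) (x l)) *
            ∏ l ∈ T \ S₂, hwProb (β₂ l) (x l) := by
      intro T
      rw [← marg A K₁ S₁ π₁ α₁ β₁ (fun k l => (hα₁ k l).2) (fun l => (hβ₁ l).2) T x,
          ← marg A K₂ S₂ π₂ α₂ β₂ (fun k l => (hα₂ k l).2) (fun l => (hβ₂ l).2) T x]
      exact Finset.sum_congr rfl fun y _ => (hP₁ y).symm.trans (hP₂ y)
    have hA := key S₁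
    have hB := key (S₁ ∩ S₂)
    rw [Finset.inter_self, Finset.sdiff_self, Finset.prod_empty, mul_one] at hA
    rw [show S₁ ∩ (S₁ ∩ S₂) = S₁ ∩ S₂ by rw [← Finset.inter_assoc, Finset.inter_self],
        show S₂ ∩ (S₁ ∩ S₂) = S₁ ∩ S₂ by
          rw [Finset.inter_comm S₁ S₂, ← Finset.inter_assoc, Finset.inter_self],
        Finset.sdiff_eq_empty_iff_subset.2 Finset.inter_subset_left,
        Finset.sdiff_eq_empty_iff_subset.2 Finset.inter_subset_right] at hB
    simp only [Finset.prod_empty, mul_one] at hB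
    rw [show S₂ ∩ S₁ = S₁ ∩ S₂ from Finset.inter_comm _ _, ← hB,
        show S₁ \ S₂ = S₁ \ (S₁ ∩ S₂) by
          rw [Finset.sdiff_inter_self_left]] at hA
    rw [hP₁ x, mixtureProb, mixtureProb, hA]
    have hsplit : (S₁ ∩ S₂)ᶜ = (S₁ \ (S₁ ∩ S₂)) ∪ S₁ᶜ := by
      ext l
      simp only [Finset.mem_compl, Finset.mem_union, Finset.mem_sdiff, Finset.mem_inter]
      by_cases h : l ∈ S₁ <;> simp [h]
    rw [hsplit, Finset.prod_union (Finset.disjoint_left.2 fun l hl hl' => by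
      simp only [Finset.mem_sdiff] at hl
      exact (Finset.mem_compl.1 hl') hl.1)]
    have e1 : ∏ l ∈ S₁ \ (S₁ ∩ S₂), hwProb ((fun l => if l ∈ S₁ then β₂ l else β₁ l) l) (x l)
        = ∏ l ∈ S₁ \ (S₁ ∩ S₂), hwProb (β₂ l) (x l) := by
      refine Finset.prod_congr rfl fun l hl => ?_
      simp only [Finset.mem_sdiff] at hl
      simp [hl.1]
    have e2 : ∏ l ∈ S₁ᶜ, hwProb ((fun l => if l ∈ S₁ then β₂ l else β₁ l) l) (x l)
        = ∏ l ∈ S₁ᶜ, hwProb (β₁ l) (x l) := by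
      refine Finset.prod_congr rfl fun l hl => ?_
      simp only [Finset.mem_compl] at hl
      simp [hl]
    rw [e1, e2]
    ring

/-- for `K₁, K₂ ∈ {1, …, K_max}` and nonempty loci subsets `S₁, S₂`,
`M_{(K₁,S₁)} ∩ M_{(K₂,S₂)} = M_{(K₁ ∧ K₂, S₁ ∩ S₂)}`. -/
theorem model_inter {L : ℕ} (A : Fin L → ℕ) (Kmax : ℕ) (K₁ K₂ : ℕ) (S₁ S₂ : Finset (Fin L))
    (hK₁ : 1 ≤ K₁) (hK₁' : K₁ ≤ Kmax) (hK₂ : 1 ≤ K₂) (hK₂' : K₂ ≤ Kmax)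
    (hS₁ : S₁.Nonempty) (hS₂ : S₂.Nonempty) :
    Model A K₁ S₁ ∩ Model A K₂ S₂ = Model A (min K₁ K₂) (S₁ ∩ S₂) := by
  apply Set.Subset.antisymm
  · rintro P ⟨h1, h2⟩
    rcases le_total K₁ K₂ with h | h
    · rw [min_eq_left h]
      exact model_inter_subset A h1 h2
    · rw [min_eq_right h, Finset.inter_comm S₁ S₂]
      exact model_inter_subset A h2 h1
  · intro P hP
    exact ⟨model_mono A (min_le_left _ _) (le_min hK₁ hK₂) Finset.inter_subset_left hP,
      model_mono A (min_le_right _ _) (le_min hK₁ hK₂) Finset.inter_subset_right hP⟩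
end

section
/- (Proposition 2) Let X be a finite set, P₀ a distribution on X with P₀(u) > 0 for all u, and {Q_θ : θ ∈ Θ} a family of distributions on X such that Θ^δ̃ = {θ : Q_θ(u) ≥ δ̃ ∀u} is nonempty for some δ̃ ∈ (0,1). Set p = min_u P₀(u) and choose δ with 0 < δ < δ̃^{1/p} and δ ≤ p. Then for i.i.d. data from P₀, sup_{θ∈Θ} (1/n)ℓ_n(Q_θ) = sup_{θ∈Θ^δ} (1/n)ℓ_n(Q_θ) + o_{P₀}(1), where Θ^δ = {θ : Q_θ(u) ≥ δ ∀u} and ℓ_n(Q) = Σ_u n_u ln Q(u). -/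
open Finset Filter MeasureTheory ProbabilityTheory

open Topology

lemma sup_eq_sup_restrict {X : Type*} [Fintype X] [Nonempty X]
    {Θ : Type*} [Nonempty Θ] (Q : Θ → X → ℝ)
    (hQpos : ∀ θ u, 0 < Q θ u) (hQsum : ∀ θ, ∑ u, Q θ u = 1)
    (δt δ c : ℝ) (hδt0 : 0 < δt)
    (θt : Θ) (hθt : ∀ u, δt ≤ Q θt u) (hθtδ : ∀ u, δ ≤ Q θt u)
    (hδ0 : 0 < δ) (hδ1 : δ < 1)
    (hkey : c * Real.log δ ≤ Real.log δt)
    (r : X → ℝ) (hr0 : ∀ u, 0 ≤ r u) (hr1 : ∑ u, r u = 1)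
    (hrc : ∀ u, c ≤ r u) :
    (⨆ θ : Θ, ∑ u, r u * Real.log (Q θ u))
      = ⨆ θ : {θ : Θ // ∀ u, δ ≤ Q θ u}, ∑ u, r u * Real.log (Q (θ : Θ) u) := by
  classical
  have hQle1 : ∀ θ u, Q θ u ≤ 1 := fun θ u =>
    (hQsum θ) ▸ Finset.single_le_sum (fun v _ => (hQpos θ v).le) (mem_univ u)
  have hlogQ : ∀ θ u, Real.log (Q θ u) ≤ 0 := fun θ u =>
    Real.log_nonpos (hQpos θ u).le (hQle1 θ u)
  have hterm : ∀ θ u, r u * Real.log (Q θ u) ≤ 0 := fun θ u =>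
    mul_nonpos_of_nonneg_of_nonpos (hr0 u) (hlogQ θ u)
  have hg0 : ∀ θ, ∑ u, r u * Real.log (Q θ u) ≤ 0 := fun θ =>
    Finset.sum_nonpos (fun u _ => hterm θ u)
  have bddA : BddAbove (Set.range fun θ : Θ => ∑ u, r u * Real.log (Q θ u)) :=
    ⟨0, by rintro x ⟨θ, rfl⟩; exact hg0 θ⟩
  have : Nonempty {θ : Θ // ∀ u, δ ≤ Q θ u} := ⟨⟨θt, hθtδ⟩⟩
  have bddB : BddAbove (Set.range fun θ : {θ : Θ // ∀ u, δ ≤ Q θ u} =>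
      ∑ u, r u * Real.log (Q (θ : Θ) u)) :=
    ⟨0, by rintro x ⟨θ, rfl⟩; exact hg0 θ.1⟩
  have hθtlb : Real.log δt ≤ ∑ u, r u * Real.log (Q θt u) := by
    calc Real.log δt = ∑ u, r u * Real.log δt := by rw [← Finset.sum_mul, hr1, one_mul]
      _ ≤ ∑ u, r u * Real.log (Q θt u) :=
        Finset.sum_le_sum fun u _ =>
          mul_le_mul_of_nonneg_left (Real.log_le_log hδt0 (hθt u)) (hr0 u)
  refine le_antisymm (ciSup_le fun θ => ?_) (ciSup_le fun θs => le_ciSup bddA θs.1)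
  by_cases hθ : ∀ u, δ ≤ Q θ u
  · exact le_ciSup bddB ⟨θ, hθ⟩
  · push_neg at hθ
    obtain ⟨u₁, hu₁⟩ := hθ
    have h1 : ∑ u, r u * Real.log (Q θ u) ≤ r u₁ * Real.log (Q θ u₁) := by
      rw [← Finset.add_sum_erase _ _ (mem_univ u₁)]
      have : ∑ u ∈ Finset.univ.erase u₁, r u * Real.log (Q θ u) ≤ 0 :=
        Finset.sum_nonpos fun u _ => hterm θ u
      linarith
    have h2 : r u₁ * Real.log (Q θ u₁) ≤ r u₁ * Real.log δ :=
      mul_le_mul_of_nonneg_left (Real.log_le_log (hQpos θ u₁) hu₁.le) (hr0 u₁)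
    have h3 : r u₁ * Real.log δ ≤ c * Real.log δ :=
      mul_le_mul_of_nonpos_right (hrc u₁) (Real.log_nonpos hδ0.le hδ1.le)
    calc ∑ u, r u * Real.log (Q θ u) ≤ c * Real.log δ := by linarith
      _ ≤ Real.log δt := hkey
      _ ≤ ∑ u, r u * Real.log (Q θt u) := hθtlb
      _ ≤ _ := le_ciSup bddB ⟨θt, hθtδ⟩

/-- Proposition 2: restriction of the likelihood maximization to
`Θ^δ = {θ : Q_θ(u) ≥ δ ∀u}`: with `p = min_u P₀(u)`, `Θ^δ̃` nonempty for some
`δ̃ ∈ (0,1)`, and `0 < δ < δ̃^(1/p)`, `δ ≤ p`, one has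
`sup_{θ∈Θ} (1/n)ℓ_n(Q_θ) = sup_{θ∈Θ^δ} (1/n)ℓ_n(Q_θ) + o_{P₀}(1)`. -/
theorem sup_loglik_restriction {X : Type*} [Fintype X] [Nonempty X]
    [MeasurableSpace X] [MeasurableSingletonClass X]
    {Ω : Type*} [MeasurableSpace Ω] (μ : Measure Ω) [IsProbabilityMeasure μ]
    (Xs : ℕ → Ω → X) (hmeas : ∀ i, Measurable (Xs i))
    (hindep : iIndepFun Xs μ)
    (P₀ : X → ℝ) (hpos : ∀ u, 0 < P₀ u) (hsum : ∑ u, P₀ u = 1)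
    (hdist : ∀ i u, μ {ω | Xs i ω = u} = ENNReal.ofReal (P₀ u))
    {Θ : Type*} [Nonempty Θ] (Q : Θ → X → ℝ)
    (hQpos : ∀ θ u, 0 < Q θ u) (hQsum : ∀ θ, ∑ u, Q θ u = 1)
    (δt : ℝ) (hδt0 : 0 < δt) (hδt1 : δt < 1)
    (hΘδt : ∃ θ, ∀ u, δt ≤ Q θ u)
    (δ : ℝ) (hδ0 : 0 < δ) (hδδt : δ < δt ^ (1 / (⨅ u, P₀ u)))
    (hδp : δ ≤ ⨅ u, P₀ u) :
    ∀ ε > (0 : ℝ), Tendsto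
      (fun (n : ℕ) => μ {ω | ε ≤
        |(⨆ θ : Θ, (1 / (n : ℝ)) * ∑ i ∈ Finset.range n, Real.log (Q θ (Xs i ω)))
          - ⨆ θ : {θ : Θ // ∀ u, δ ≤ Q θ u},
              (1 / (n : ℝ)) * ∑ i ∈ Finset.range n, Real.log (Q θ (Xs i ω))|})
      atTop (nhds 0) := by
  classical
  -- facts about p = ⨅ u, P₀ u
  set p : ℝ := ⨅ u, P₀ u with hp
  obtain ⟨u₀, hu₀⟩ := Finite.exists_min P₀
  have hbdd : BddBelow (Set.range P₀) := (Set.finite_range P₀).bddBelow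
  have hpu₀ : p = P₀ u₀ := le_antisymm (ciInf_le hbdd u₀) (le_ciInf hu₀)
  have hppos : 0 < p := hpu₀ ▸ hpos u₀
  have hple : ∀ u, p ≤ P₀ u := fun u => ciInf_le hbdd u
  have hp1 : p ≤ 1 := by
    have h := Finset.single_le_sum (fun v (_ : v ∈ univ) => (hpos v).le) (mem_univ u₀)
    rw [hsum] at h
    linarith [hpu₀ ▸ h]
  -- facts about δ
  have hδtp : δt ^ (1 / p) ≤ δt := by
    calc δt ^ (1 / p) ≤ δt ^ (1:ℝ) :=
          Real.rpow_le_rpow_of_exponent_ge hδt0 hδt1.le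
            (by rw [le_div_iff₀ hppos]; linarith)
      _ = δt := Real.rpow_one δt
  have hδδt' : δ < δt := lt_of_lt_of_le hδδt hδtp
  have hδ1 : δ < 1 := hδδt'.trans hδt1
  have hlogδ : Real.log δ < 0 := Real.log_neg hδ0 hδ1
  have hplog : p * Real.log δ < Real.log δt := by
    have h1 : Real.log δ < Real.log (δt ^ (1 / p)) := Real.log_lt_log hδ0 hδδt
    rw [Real.log_rpow hδt0] at h1
    have h2 := (mul_lt_mul_iff_right₀ hppos).mpr h1
    calc p * Real.log δ < p * (1 / p * Real.log δt) := h2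
      _ = Real.log δt := by field_simp
  set η : ℝ := (Real.log δt - p * Real.log δ) / (-Real.log δ) with hη
  have hηpos : 0 < η := div_pos (by linarith) (by linarith)
  have hkey : (p - η) * Real.log δ ≤ Real.log δt := by
    have hL : -Real.log δ ≠ 0 := ne_of_gt (by linarith)
    have h4 : η * (-Real.log δ) = Real.log δt - p * Real.log δ :=
      div_mul_cancel₀ _ hL
    linear_combination h4
  obtain ⟨θt, hθt⟩ := hΘδt
  have hθtδ : ∀ u, δ ≤ Q θt u := fun u => le_trans hδδt'.le (hθt u)
  have hne : Nonempty {θ : Θ // ∀ u, δ ≤ Q θ u} := ⟨⟨θt, hθtδ⟩⟩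
  -- empirical frequencies
  set c : ℕ → Ω → X → ℝ :=
    fun n ω u => ∑ i ∈ Finset.range n, (if Xs i ω = u then (1:ℝ) else 0) with hc
  have hcnn : ∀ n ω u, 0 ≤ c n ω u := fun n ω u =>
    Finset.sum_nonneg fun i _ => by split <;> norm_num
  have hcsum : ∀ n ω, ∑ u, c n ω u = (n : ℝ) := by
    intro n ω
    rw [hc, Finset.sum_comm]
    simp
  -- strong law of large numbers for each u
  have hsll : ∀ u : X, ∀ᵐ ω ∂μ,
      Tendsto (fun n : ℕ => (n : ℝ)⁻¹ * c n ω u) atTop (𝓝 (P₀ u)) := by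
    intro u
    set Y : ℕ → Ω → ℝ := fun i ω => if Xs i ω = u then (1:ℝ) else 0 with hY
    have hYm : ∀ i, Measurable (Y i) := fun i =>
      (measurable_of_countable (fun x : X => if x = u then (1:ℝ) else 0)).comp (hmeas i)
    have hYint : Integrable (Y 0) μ := by
      refine (integrable_const (1:ℝ)).mono' ((hYm 0).aestronglyMeasurable) ?_
      filter_upwards with ω
      rw [hY]
      simp only
      split <;> simp
    have hYindep : Pairwise (Function.onFun (IndepFun · · μ) Y) := by
      intro i j hij
      exact (hindep.indepFun hij).comp
        (measurable_of_countable (fun x : X => if x = u then (1:ℝ) else 0))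
        (measurable_of_countable (fun x : X => if x = u then (1:ℝ) else 0))
    have hYident : ∀ i, IdentDistrib (Y i) (Y 0) μ μ := by
      intro i
      have hXid : IdentDistrib (Xs i) (Xs 0) μ μ := by
        refine ⟨(hmeas i).aemeasurable, (hmeas 0).aemeasurable, ?_⟩
        refine MeasureTheory.Measure.ext_of_singleton (fun u' => ?_)
        rw [Measure.map_apply (hmeas i) (measurableSet_singleton u'),
            Measure.map_apply (hmeas 0) (measurableSet_singleton u')]
        have e1 : Xs i ⁻¹' {u'} = {ω | Xs i ω = u'} := rfl
        have e2 : Xs 0 ⁻¹' {u'} = {ω | Xs 0 ω = u'} := rfl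
        rw [e1, e2, hdist i u', hdist 0 u']
      exact hXid.comp (measurable_of_countable (fun x : X => if x = u then (1:ℝ) else 0))
    have hEY : μ[Y 0] = P₀ u := by
      have hYind : Y 0 = Set.indicator {ω | Xs 0 ω = u} (fun _ => (1:ℝ)) := by
        funext ω
        by_cases h : Xs 0 ω = u <;> simp [hY, Set.indicator_apply, h]
      have hms : MeasurableSet {ω | Xs 0 ω = u} := (hmeas 0) (measurableSet_singleton u)
      rw [hYind, integral_indicator_const (1:ℝ) hms, Measure.real, hdist 0 u, smul_eq_mul, mul_one,
        ENNReal.toReal_ofReal (hpos u).le]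
    have := strong_law_ae Y hYint hYindep hYident
    rw [hEY] at this
    filter_upwards [this] with ω hω
    have : (fun n : ℕ => (n : ℝ)⁻¹ • ∑ i ∈ Finset.range n, Y i ω)
        = fun n : ℕ => (n : ℝ)⁻¹ * c n ω u := by
      funext n; rw [smul_eq_mul, hc]
    rwa [this] at hω
  have hae : ∀ᵐ ω ∂μ, ∀ u : X,
      Tendsto (fun n : ℕ => (n : ℝ)⁻¹ * c n ω u) atTop (𝓝 (P₀ u)) :=
    (ae_all_iff).mpr hsll
  -- rewriting of log-likelihood via counts
  have hrw : ∀ (n : ℕ) (ω : Ω) (θ : Θ),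
      (1 / (n : ℝ)) * ∑ i ∈ Finset.range n, Real.log (Q θ (Xs i ω))
        = ∑ u, ((n : ℝ)⁻¹ * c n ω u) * Real.log (Q θ u) := by
    intro n ω θ
    have h1 : ∑ i ∈ Finset.range n, Real.log (Q θ (Xs i ω))
        = ∑ u, c n ω u * Real.log (Q θ u) := by
      rw [hc]
      calc ∑ i ∈ Finset.range n, Real.log (Q θ (Xs i ω))
          = ∑ i ∈ Finset.range n, ∑ u,
              (if Xs i ω = u then (1:ℝ) else 0) * Real.log (Q θ u) := by
            refine Finset.sum_congr rfl fun i _ => ?_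
            simp [ite_mul]
        _ = ∑ u, (∑ i ∈ Finset.range n, (if Xs i ω = u then (1:ℝ) else 0))
              * Real.log (Q θ u) := by
            rw [Finset.sum_comm]
            exact Finset.sum_congr rfl fun u _ => (Finset.sum_mul _ _ _).symm
    rw [h1, Finset.mul_sum]
    exact Finset.sum_congr rfl fun u _ => by ring
  -- the difference of suprema
  set f : ℕ → Ω → ℝ := fun n ω =>
    (⨆ θ : Θ, (1 / (n : ℝ)) * ∑ i ∈ Finset.range n, Real.log (Q θ (Xs i ω)))
      - ⨆ θ : {θ : Θ // ∀ u, δ ≤ Q θ u},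
          (1 / (n : ℝ)) * ∑ i ∈ Finset.range n, Real.log (Q (θ : Θ) (Xs i ω)) with hf
  have haef : ∀ᵐ ω ∂μ, Tendsto (fun n => f n ω) atTop (𝓝 0) := by
    filter_upwards [hae] with ω hω
    have hev : ∀ᶠ n in atTop, f n ω = 0 := by
      have h1 : ∀ᶠ n : ℕ in atTop, ∀ u, p - η ≤ (n : ℝ)⁻¹ * c n ω u := by
        rw [Filter.eventually_all]
        intro u
        exact (hω u).eventually (eventually_ge_nhds (by linarith [hple u]))
      filter_upwards [h1, eventually_ge_atTop 1] with n hn hn1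
      have hnpos : (0:ℝ) < n := by exact_mod_cast hn1
      have hr0' : ∀ u, 0 ≤ (n : ℝ)⁻¹ * c n ω u := fun u =>
        mul_nonneg (by positivity) (hcnn n ω u)
      have hr1' : ∑ u, (n : ℝ)⁻¹ * c n ω u = 1 := by
        rw [← Finset.mul_sum, hcsum]
        field_simp
      have hsup := sup_eq_sup_restrict Q hQpos hQsum δt δ (p - η) hδt0 θt hθt hθtδ hδ0 hδ1
        hkey (fun u => (n : ℝ)⁻¹ * c n ω u) hr0' hr1' hn
      have e1 : (⨆ θ : Θ, (1 / (n : ℝ)) * ∑ i ∈ Finset.range n, Real.log (Q θ (Xs i ω)))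
          = ⨆ θ : Θ, ∑ u, ((n : ℝ)⁻¹ * c n ω u) * Real.log (Q θ u) :=
        iSup_congr fun θ => hrw n ω θ
      have e2 : (⨆ θ : {θ : Θ // ∀ u, δ ≤ Q θ u},
            (1 / (n : ℝ)) * ∑ i ∈ Finset.range n, Real.log (Q (θ : Θ) (Xs i ω)))
          = ⨆ θ : {θ : Θ // ∀ u, δ ≤ Q θ u},
              ∑ u, ((n : ℝ)⁻¹ * c n ω u) * Real.log (Q (θ : Θ) u) :=
        iSup_congr fun θ => hrw n ω θ.1
      rw [hf]
      simp only
      rw [sub_eq_zero, e1, e2]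
      exact hsup
    exact Tendsto.congr' (hev.mono fun n h => h.symm) tendsto_const_nhds
  -- measurability of f n
  have hfmeas : ∀ n, Measurable (f n) := by
    intro n
    have hT : Measurable fun ω (i : Fin n) => Xs i ω :=
      measurable_pi_lambda _ fun i => hmeas i
    have hfac : f n = (fun v : Fin n → X =>
        (⨆ θ : Θ, (1 / (n : ℝ)) * ∑ i : Fin n, Real.log (Q θ (v i)))
          - ⨆ θ : {θ : Θ // ∀ u, δ ≤ Q θ u},
              (1 / (n : ℝ)) * ∑ i : Fin n, Real.log (Q (θ : Θ) (v i)))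
        ∘ (fun ω (i : Fin n) => Xs i ω) := by
      funext ω
      rw [hf]
      simp only [Function.comp]
      congr 1
      · exact iSup_congr fun θ => by
          rw [← Fin.sum_univ_eq_sum_range (fun i => Real.log (Q θ (Xs i ω))) n]
      · exact iSup_congr fun θ => by
          rw [← Fin.sum_univ_eq_sum_range (fun i => Real.log (Q (θ : Θ) (Xs i ω))) n]
    rw [hfac]
    exact (measurable_of_countable _).comp hT
  -- conclusion via convergence in measure
  intro ε hε
  have key := tendstoInMeasure_of_tendsto_ae (μ := μ) (f := f) (g := fun _ => (0:ℝ))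
    (fun n => (hfmeas n).aestronglyMeasurable) haef (ENNReal.ofReal ε) (ENNReal.ofReal_pos.mpr hε)
  refine key.congr fun n => ?_
  congr 1
  ext ω
  rw [hf]
  simp [Real.dist_eq, Real.enorm_eq_ofReal_abs, ENNReal.ofReal_le_ofReal_iff (abs_nonneg _)]
end

section
/- (Theorem: consistency of BIC model selection on a finite model collection) Let X be a finite set and let {M_m : m ∈ M} be a finite collection of models, each M_m a set of distributions on X parameterized continuously by a compact-exhaustible parameter set, with dimensions d_m satisfying: if m ≠ m₀ and P₀ ∈ M_m then d_m > d_{m₀}. Assume P₀ ∈ M_{m₀}, P₀(u) > 0 for all u ∈ X, and each model contains some distribution bounded below by a positive constant. Define BIC_n(m) = 2 sup_{Q∈M_m} ℓ_n(Q) − d_m ln n and m̂_n = argmax_m BIC_n(m). Then P₀(m̂_n = m₀) → 1 as n → ∞. -/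
open Finset Filter MeasureTheory ProbabilityTheory

open scoped ENNReal
set_option maxHeartbeats 1000000

/-- scalar Gibbs-type lemma -/
lemma BIC.mul_log_sub_le {a q p : ℝ} (ha : 0 ≤ a) (hq : 0 < q) (hp : 0 < p) :
    a * Real.log q - a * Real.log p ≤ a * q / p - a := by
  rcases eq_or_lt_of_le ha with h | h
  · simp [← h]
  · have h1 : Real.log q - Real.log p ≤ q / p - 1 := by
      rw [← Real.log_div hq.ne' hp.ne']
      exact Real.log_le_sub_one_of_pos (div_pos hq hp)
    have := mul_le_mul_of_nonneg_left h1 ha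
    calc a * Real.log q - a * Real.log p = a * (Real.log q - Real.log p) := by ring
    _ ≤ a * (q / p - 1) := this
    _ = a * q / p - a := by ring

lemma BIC.fiber_sum {X : Type*} [Fintype X] [DecidableEq X] (f : ℕ → X) (n : ℕ) (g : X → ℝ) :
    ∑ i ∈ Finset.range n, g (f i)
      = ∑ u, (∑ i ∈ Finset.range n, if f i = u then (1:ℝ) else 0) * g u := by
  simp_rw [Finset.sum_mul, ite_mul, one_mul, zero_mul]
  rw [Finset.sum_comm]
  refine Finset.sum_congr rfl fun i _ => ?_
  simp

lemma BIC.gibbs_empirical {X : Type*} [Fintype X] (ν : X → ℝ) (hν : ∀ u, 0 ≤ ν u)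
    {n : ℝ} (hn : 0 < n) (hνs : ∑ u, ν u = n) (Q : X → ℝ) (hQ : ∀ u, 0 < Q u)
    (hQs : ∑ u, Q u = 1) :
    ∑ u, ν u * Real.log (Q u) ≤ ∑ u, ν u * Real.log (ν u / n) := by
  have key : ∀ u, ν u * Real.log (Q u) - ν u * Real.log (ν u / n) ≤ n * Q u - ν u := by
    intro u
    rcases eq_or_lt_of_le (hν u) with h | h
    · rw [← h]
      simp
      exact mul_nonneg hn.le (hQ u).le
    · have h2 := BIC.mul_log_sub_le (le_of_lt h) (hQ u) (div_pos h hn)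
      calc ν u * Real.log (Q u) - ν u * Real.log (ν u / n)
          ≤ ν u * Q u / (ν u / n) - ν u := h2
        _ = n * Q u - ν u := by
            have hne0 := h.ne'
            have : ν u * Q u / (ν u / n) = n * Q u := by
              field_simp
            rw [this]
  have hsum := Finset.sum_le_sum (fun u (_ : u ∈ Finset.univ) => key u)
  rw [Finset.sum_sub_distrib] at hsum
  have : ∑ u, (n * Q u - ν u) = 0 := by
    rw [Finset.sum_sub_distrib, ← Finset.mul_sum, hQs, hνs, mul_one, sub_self]
  linarith

lemma BIC.chisq_bound {X : Type*} [Fintype X] (ν p : X → ℝ) (hν : ∀ u, 0 ≤ ν u)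
    (hp : ∀ u, 0 < p u) {n : ℝ} (hn : 0 < n) (hνs : ∑ u, ν u = n) (hps : ∑ u, p u = 1) :
    ∑ u, ν u * Real.log (ν u / n)
      ≤ ∑ u, ν u * Real.log (p u) + ∑ u, (ν u - n * p u)^2 / (n * p u) := by
  have key : ∀ u, ν u * Real.log (ν u / n) - ν u * Real.log (p u) ≤ ν u ^ 2 / (n * p u) - ν u := by
    intro u
    rcases eq_or_lt_of_le (hν u) with h | h
    · rw [← h]; simp
    · have h2 := BIC.mul_log_sub_le (le_of_lt h) (div_pos h hn) (hp u)
      calc ν u * Real.log (ν u / n) - ν u * Real.log (p u)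
          ≤ ν u * (ν u / n) / p u - ν u := h2
        _ = ν u ^ 2 / (n * p u) - ν u := by rw [mul_div_assoc', div_div, sq]
  have hid : ∀ u, (ν u - n * p u)^2 / (n * p u) = ν u ^ 2 / (n * p u) - 2 * ν u + n * p u := by
    intro u
    have hnp : n * p u ≠ 0 := (mul_pos hn (hp u)).ne'
    have hp0 : p u ≠ 0 := (hp u).ne'
    have hn0 : n ≠ 0 := hn.ne'
    field_simp
    ring
  have hsum := Finset.sum_le_sum (fun u (_ : u ∈ Finset.univ) => key u)
  rw [Finset.sum_sub_distrib, Finset.sum_sub_distrib, hνs] at hsum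
  have hid2 : ∑ u, (ν u - n * p u)^2 / (n * p u) = ∑ u, ν u ^ 2 / (n * p u) - n := by
    simp_rw [hid]
    rw [Finset.sum_add_distrib, Finset.sum_sub_distrib, ← Finset.mul_sum, ← Finset.mul_sum,
      hνs, hps, mul_one]
    ring
  linarith

lemma BIC.kl_pos {X : Type*} [Fintype X] (p Q : X → ℝ) (hp : ∀ u, 0 < p u) (hQ : ∀ u, 0 < Q u)
    (hps : ∑ u, p u = 1) (hQs : ∑ u, Q u = 1) (hne : Q ≠ p) :
    0 < ∑ u, p u * (Real.log (p u) - Real.log (Q u)) := by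
  obtain ⟨u₀, hu₀⟩ : ∃ u, Q u ≠ p u := by
    by_contra h
    push_neg at h
    exact hne (funext h)
  have hle : ∀ u ∈ Finset.univ, p u * (Real.log (Q u) - Real.log (p u)) ≤ Q u - p u := by
    intro u _
    have := BIC.mul_log_sub_le (le_of_lt (hp u)) (hQ u) (hp u)
    calc p u * (Real.log (Q u) - Real.log (p u))
        = p u * Real.log (Q u) - p u * Real.log (p u) := by ring
      _ ≤ p u * Q u / p u - p u := this
      _ = Q u - p u := by rw [mul_comm, mul_div_assoc, div_self (hp u).ne', mul_one]
  have hlt : p u₀ * (Real.log (Q u₀) - Real.log (p u₀)) < Q u₀ - p u₀ := by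
    have h1 : Real.log (Q u₀ / p u₀) < Q u₀ / p u₀ - 1 :=
      Real.log_lt_sub_one_of_pos (div_pos (hQ u₀) (hp u₀))
        (fun h => hu₀ ((div_eq_one_iff_eq (hp u₀).ne').mp h))
    have h2 := mul_lt_mul_of_pos_left h1 (hp u₀)
    rw [Real.log_div (hQ u₀).ne' (hp u₀).ne'] at h2
    calc p u₀ * (Real.log (Q u₀) - Real.log (p u₀)) < p u₀ * (Q u₀ / p u₀ - 1) := h2
      _ = Q u₀ - p u₀ := by
          have hne0 := (hp u₀).ne'
          field_simp
  have := Finset.sum_lt_sum hle ⟨u₀, Finset.mem_univ u₀, hlt⟩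
  have hz : ∑ u, (Q u - p u) = 0 := by rw [Finset.sum_sub_distrib, hQs, hps, sub_self]
  have h3 : ∑ u, p u * (Real.log (Q u) - Real.log (p u)) < 0 := by rw [← hz]; exact this
  have h4 : ∑ u, p u * (Real.log (p u) - Real.log (Q u))
      = - ∑ u, p u * (Real.log (Q u) - Real.log (p u)) := by
    rw [← Finset.sum_neg_distrib]
    exact Finset.sum_congr rfl fun u _ => by ring
  rw [h4]
  linarith


lemma BIC.exists_kl_gap {X : Type*} [Fintype X] (P₀ : X → ℝ)
    (hp : ∀ u, 0 < P₀ u) (hps : ∑ u, P₀ u = 1)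
    (Modm : Set (X → ℝ))
    (hdistr : ∀ Q ∈ Modm, (∀ u, 0 < Q u) ∧ ∑ u, Q u = 1)
    (hparam : ∃ (dp : ℕ) (Θp : Set (Fin dp → ℝ)) (φ : (Fin dp → ℝ) → X → ℝ),
      (∀ u, ContinuousOn (fun θ => φ θ u) Θp) ∧
      (∀ δ : ℝ, 0 < δ → IsCompact {θ ∈ Θp | ∀ u, δ ≤ φ θ u}) ∧
      Modm = φ '' Θp)
    (hnotmem : P₀ ∉ Modm) {δ : ℝ} (hδ : 0 < δ) :
    ∃ ε > 0, ∀ Q ∈ Modm, (∀ u, δ ≤ Q u) →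
      ε ≤ ∑ u, P₀ u * (Real.log (P₀ u) - Real.log (Q u)) := by
  obtain ⟨dp, Θp, φ, hcont, hcomp, hMod⟩ := hparam
  set K := {θ ∈ Θp | ∀ u, δ ≤ φ θ u} with hK
  have hKc : IsCompact K := hcomp δ hδ
  have hφc : ContinuousOn φ Θp := continuousOn_pi.2 hcont
  have hC : IsCompact (φ '' K) := hKc.image_of_continuousOn (hφc.mono (fun θ hθ => hθ.1))
  have hsub : ∀ Q ∈ Modm, (∀ u, δ ≤ Q u) → Q ∈ φ '' K := by
    intro Q hQ hδQ
    rw [hMod] at hQ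
    obtain ⟨θ, hθ, rfl⟩ := hQ
    exact ⟨θ, ⟨hθ, hδQ⟩, rfl⟩
  by_cases hne : (φ '' K).Nonempty
  · set F : (X → ℝ) → ℝ := fun Q => ∑ u, P₀ u * (Real.log (P₀ u) - Real.log (Q u)) with hF
    have hQpos : ∀ Q ∈ φ '' K, ∀ u, (0:ℝ) < Q u := by
      intro Q hQ u
      obtain ⟨θ, hθ, rfl⟩ := hQ
      exact lt_of_lt_of_le hδ (hθ.2 u)
    have hFc : ContinuousOn F (φ '' K) := by
      apply continuousOn_finset_sum
      intro u _
      refine continuousOn_const.mul (continuousOn_const.sub ?_)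
      exact ContinuousOn.log (continuous_apply u).continuousOn
        (fun Q hQ => (hQpos Q hQ u).ne')
    obtain ⟨Qb, hQbmem, hmin⟩ := hC.exists_isMinOn hne hFc
    have hQbMod : Qb ∈ Modm := by
      rw [hMod]
      obtain ⟨θ, hθ, rfl⟩ := hQbmem
      exact ⟨θ, hθ.1, rfl⟩
    obtain ⟨hQbpos, hQbsum⟩ := hdistr Qb hQbMod
    have hεpos : 0 < F Qb :=
      BIC.kl_pos P₀ Qb hp hQbpos hps hQbsum (fun h => hnotmem (h ▸ hQbMod))
    exact ⟨F Qb, hεpos, fun Q hQ hδQ => hmin (hsub Q hQ hδQ)⟩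
  · exact ⟨1, one_pos, fun Q hQ hδQ => absurd ⟨Q, hsub Q hQ hδQ⟩ hne⟩

lemma BIC.count_concentration {X : Type*} [Fintype X] [DecidableEq X] [MeasurableSpace X]
    [MeasurableSingletonClass X]
    {Om : Type*} [MeasurableSpace Om] (mu : Measure Om) [IsProbabilityMeasure mu]
    (Xs : ℕ → Om → X) (hmeas : ∀ i, Measurable (Xs i))
    (hindep : iIndepFun Xs mu)
    (P₀ : X → ℝ) (hpos : ∀ u, 0 < P₀ u) (hle1 : ∀ u, P₀ u ≤ 1)
    (hdist : ∀ i u, mu {om | Xs i om = u} = ENNReal.ofReal (P₀ u))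
    (u : X) (n : ℕ) {s : ℝ} (hs : 0 < s) :
    mu {om | s ≤ |(∑ i ∈ Finset.range n, if Xs i om = u then (1:ℝ) else 0) - n * P₀ u|}
      ≤ ENNReal.ofReal ((n : ℝ) / (4 * s ^ 2)) := by
  classical
  set g : X → ℝ := fun x => if x = u then 1 else 0 with hg
  have hgm : Measurable g := measurable_of_countable g
  set Y : ℕ → Om → ℝ := fun i => g ∘ Xs i with hY
  have hYm : ∀ i, Measurable (Y i) := fun i => hgm.comp (hmeas i)
  have hYbdd : ∀ i om, Y i om ∈ Set.Icc (0:ℝ) 1 := by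
    intro i om
    simp only [hY, hg, Function.comp_apply]
    split <;> norm_num
  have hYL2 : ∀ i, MemLp (Y i) 2 mu := fun i =>
    memLp_of_bounded (Eventually.of_forall (hYbdd i)) (hYm i).aestronglyMeasurable 2
  have hmeasSet : ∀ i, MeasurableSet {om | Xs i om = u} := fun i =>
    (hmeas i) (measurableSet_singleton u)
  have hEY : ∀ i, mu[Y i] = P₀ u := by
    intro i
    have : Y i = Set.indicator {om | Xs i om = u} (1 : Om → ℝ) := by
      funext om
      simp only [hY, hg, Function.comp_apply, Set.indicator_apply, Set.mem_setOf_eq, Pi.one_apply]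
    rw [this, integral_indicator_one (hmeasSet i), Measure.real, hdist i u,
      ENNReal.toReal_ofReal (hpos u).le]
  have hYsq : ∀ i, (Y i) ^ 2 = Y i := by
    intro i
    funext om
    simp only [Pi.pow_apply, hY, hg, Function.comp_apply]
    split <;> norm_num
  have hVarY : ∀ i, variance (Y i) mu = P₀ u * (1 - P₀ u) := by
    intro i
    rw [variance_eq_sub (hYL2 i), hYsq i, hEY i]
    ring
  set Sn : Om → ℝ := ∑ i ∈ Finset.range n, Y i with hSn
  have hSnL2 : MemLp Sn 2 mu := memLp_finset_sum' _ (fun i _ => hYL2 i)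
  have hESn : mu[Sn] = n * P₀ u := by
    simp only [hSn, Finset.sum_apply]
    rw [integral_finset_sum _ (fun i _ => (hYL2 i).integrable one_le_two)]
    simp [hEY, Finset.sum_const]
  have hVarSn : variance Sn mu = n * (P₀ u * (1 - P₀ u)) := by
    rw [hSn, IndepFun.variance_sum (fun i _ => hYL2 i) ?_]
    · simp [hVarY, Finset.sum_const]
    · intro i _ j _ hij
      exact (hindep.indepFun hij).comp hgm hgm
  have hVarle : variance Sn mu ≤ (n : ℝ) / 4 := by
    rw [hVarSn]
    have h1 := hpos u
    have h2 := hle1 u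
    have h3 : P₀ u * (1 - P₀ u) ≤ 1/4 := by nlinarith [sq_nonneg (P₀ u - 1/2)]
    have h4 := mul_le_mul_of_nonneg_left h3 (Nat.cast_nonneg (α := ℝ) n)
    linarith
  have hcheb := meas_ge_le_variance_div_sq (μ := mu) hSnL2 hs
  rw [show mu[Sn] = (n:ℝ) * P₀ u from hESn] at hcheb
  have hset : {om | s ≤ |Sn om - (n:ℝ) * P₀ u|}
      = {om | s ≤ |(∑ i ∈ Finset.range n, if Xs i om = u then (1:ℝ) else 0) - n * P₀ u|} := by
    ext om
    simp only [Set.mem_setOf_eq, hSn, hY, hg, Finset.sum_apply, Function.comp_apply]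
  rw [hset] at hcheb
  refine hcheb.trans (ENNReal.ofReal_le_ofReal ?_)
  have hs2 : (0:ℝ) < s ^ 2 := by positivity
  rw [div_le_div_iff₀ hs2 (by positivity)]
  calc variance Sn mu * (4 * s ^ 2) ≤ ((n:ℝ)/4) * (4 * s^2) := by
        apply mul_le_mul_of_nonneg_right hVarle; positivity
    _ = (n:ℝ) * s ^ 2 := by ring

/-- consistency of BIC model selection over a finite collection of
models of positive distributions on a finite set `X`, each parameterized
continuously by a compact-exhaustible parameter set, with dimensions such that any
other model containing `P₀` has strictly larger dimension: the BIC-maximizing model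
`m̂_n` equals the true model `m₀` with probability tending to `1`. -/
theorem bic_consistency {X : Type*} [Fintype X] [Nonempty X]
    [MeasurableSpace X] [MeasurableSingletonClass X]
    {Ω : Type*} [MeasurableSpace Ω] (μ : Measure Ω) [IsProbabilityMeasure μ]
    (Xs : ℕ → Ω → X) (hmeas : ∀ i, Measurable (Xs i))
    (hindep : iIndepFun Xs μ)
    (P₀ : X → ℝ) (hpos : ∀ u, 0 < P₀ u) (hsum : ∑ u, P₀ u = 1)
    (hdist : ∀ i u, μ {ω | Xs i ω = u} = ENNReal.ofReal (P₀ u))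
    {M : Type*} [Fintype M] (Mod : M → Set (X → ℝ)) (dm : M → ℕ) (m₀ : M)
    (hdistr : ∀ m, ∀ Q ∈ Mod m, (∀ u, 0 < Q u) ∧ ∑ u, Q u = 1)
    (hparam : ∀ m, ∃ (dp : ℕ) (Θp : Set (Fin dp → ℝ)) (φ : (Fin dp → ℝ) → X → ℝ),
      (∀ u, ContinuousOn (fun θ => φ θ u) Θp) ∧
      (∀ δ : ℝ, 0 < δ → IsCompact {θ ∈ Θp | ∀ u, δ ≤ φ θ u}) ∧
      Mod m = φ '' Θp)
    (hlb : ∀ m, ∃ Q ∈ Mod m, ∃ c > (0 : ℝ), ∀ u, c ≤ Q u)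
    (hP₀mem : P₀ ∈ Mod m₀)
    (hdim : ∀ m, m ≠ m₀ → P₀ ∈ Mod m → dm m₀ < dm m)
    (mhat : ℕ → Ω → M)
    (hmhat : ∀ (n : ℕ) (ω : Ω) (m : M),
      2 * sSup {y : ℝ | ∃ Q ∈ Mod m, y = ∑ i ∈ Finset.range n, Real.log (Q (Xs i ω))}
          - (dm m : ℝ) * Real.log n ≤
      2 * sSup {y : ℝ | ∃ Q ∈ Mod (mhat n ω),
            y = ∑ i ∈ Finset.range n, Real.log (Q (Xs i ω))}
          - (dm (mhat n ω) : ℝ) * Real.log n) :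
    Tendsto (fun (n : ℕ) => μ {ω | mhat n ω = m₀}) atTop (nhds 1) := by
  classical
  -- basic facts
  have hle1 : ∀ u, P₀ u ≤ 1 := fun u => by
    calc P₀ u ≤ ∑ v, P₀ v := Finset.single_le_sum (fun v _ => (hpos v).le) (Finset.mem_univ u)
    _ = 1 := hsum
  have hQle1 : ∀ m, ∀ Q ∈ Mod m, ∀ u, Q u ≤ 1 := fun m Q hQ u => by
    obtain ⟨hQp, hQs⟩ := hdistr m Q hQ
    calc Q u ≤ ∑ v, Q v := Finset.single_le_sum (fun v _ => (hQp v).le) (Finset.mem_univ u)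
    _ = 1 := hQs
  obtain ⟨u₀, -, hu₀⟩ := Finset.exists_min_image Finset.univ P₀
    ⟨Classical.arbitrary X, Finset.mem_univ _⟩
  set pm := P₀ u₀ with hpmdef
  have hpm0 : 0 < pm := hpos u₀
  have hpmle : ∀ u, pm ≤ P₀ u := fun u => hu₀ u (Finset.mem_univ u)
  have hpm1 : pm ≤ 1 := hle1 u₀
  have hlogpm : Real.log pm ≤ 0 := Real.log_nonpos hpm0.le hpm1
  set Kc : ℝ := (Fintype.card X : ℝ) with hKcdef
  have hKc1 : (1:ℝ) ≤ Kc := by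
    rw [hKcdef]
    exact_mod_cast Fintype.card_pos
  have hKc0 : (0:ℝ) < Kc := lt_of_lt_of_le one_pos hKc1
  -- empirical counts
  set ν : ℕ → Ω → X → ℝ :=
    fun n ω u => ∑ i ∈ Finset.range n, if Xs i ω = u then (1:ℝ) else 0 with hνdef
  have hν0 : ∀ n ω u, 0 ≤ ν n ω u := fun n ω u =>
    Finset.sum_nonneg fun i _ => by split <;> norm_num
  have hνsum : ∀ n ω, ∑ u, ν n ω u = n := by
    intro n ω
    rw [hνdef]
    rw [Finset.sum_comm]
    simp
  have hL : ∀ n ω (Q : X → ℝ), (∑ i ∈ Finset.range n, Real.log (Q (Xs i ω)))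
      = ∑ u, ν n ω u * Real.log (Q u) := fun n ω Q =>
    BIC.fiber_sum (fun i => Xs i ω) n (fun u => Real.log (Q u))
  -- sup of log-likelihoods
  set SS : M → ℕ → Ω → ℝ := fun m n ω =>
    sSup {y : ℝ | ∃ Q ∈ Mod m, y = ∑ i ∈ Finset.range n, Real.log (Q (Xs i ω))} with hSSdef
  have hbdd : ∀ m n ω, BddAbove
      {y : ℝ | ∃ Q ∈ Mod m, y = ∑ i ∈ Finset.range n, Real.log (Q (Xs i ω))} := by
    intro m n ω
    refine ⟨0, ?_⟩
    rintro y ⟨Q, hQ, rfl⟩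
    apply Finset.sum_nonpos
    intro i _
    exact Real.log_nonpos ((hdistr m Q hQ).1 _).le (hQle1 m Q hQ _)
  have hSetNe : ∀ m n ω, Set.Nonempty
      {y : ℝ | ∃ Q ∈ Mod m, y = ∑ i ∈ Finset.range n, Real.log (Q (Xs i ω))} := by
    intro m n ω
    obtain ⟨Q, hQ, -⟩ := hlb m
    exact ⟨_, Q, hQ, rfl⟩
  have hSSm₀ : ∀ n ω, (∑ u, ν n ω u * Real.log (P₀ u)) ≤ SS m₀ n ω := by
    intro n ω
    rw [← hL n ω P₀]
    exact le_csSup (hbdd m₀ n ω) ⟨P₀, hP₀mem, rfl⟩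
  -- Chebyshev wrapper
  have hcheb : ∀ (u : X) (n : ℕ) {s : ℝ}, 0 < s →
      μ {ω | s ≤ |ν n ω u - n * P₀ u|} ≤ ENNReal.ofReal ((n : ℝ) / (4 * s ^ 2)) := by
    intro u n s hs
    exact BIC.count_concentration μ Xs hmeas hindep P₀ hpos hle1 hdist u n hs
  -- growth of logarithm
  have hloglt : ∀ a : ℝ, 0 < a → ∀ᶠ (n : ℕ) in atTop, (dm m₀ : ℝ) * Real.log n < a * n := by
    intro a ha
    set d : ℝ := (dm m₀ : ℝ) with hd
    have hd0 : (0:ℝ) ≤ d := Nat.cast_nonneg _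
    have h := Real.isLittleO_log_id_atTop.def (show (0:ℝ) < a/(2*(d+1)) by positivity)
    have h2 := (tendsto_natCast_atTop_atTop (R := ℝ)).eventually h
    filter_upwards [h2, eventually_ge_atTop 1] with n hn hn1
    have hn0 : (1:ℝ) ≤ (n:ℝ) := by exact_mod_cast hn1
    simp only [Real.norm_eq_abs, id_eq] at hn
    have habs : |(n:ℝ)| = (n:ℝ) := abs_of_nonneg (by linarith)
    rw [habs] at hn
    have hl : Real.log n ≤ a/(2*(d+1)) * n := le_trans (le_abs_self _) hn
    have h3 : d * Real.log n ≤ d * (a/(2*(d+1)) * n) := mul_le_mul_of_nonneg_left hl hd0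
    have h4 : d * (a/(2*(d+1)) * n) < a * n := by
      rw [div_mul_eq_mul_div, mul_div_assoc']
      rw [div_lt_iff₀ (by positivity)]
      nlinarith [mul_pos ha (lt_of_lt_of_le zero_lt_one hn0),
        mul_nonneg (mul_nonneg ha.le (by linarith : (0:ℝ) ≤ (n:ℝ))) hd0]
    linarith
  -- the per-model bad events
  set E : M → ℕ → Set Ω := fun m n =>
    {ω | 2 * SS m₀ n ω - (dm m₀ : ℝ) * Real.log n ≤ 2 * SS m n ω - (dm m : ℝ) * Real.log n}
    with hEdef
  have hEtendsto : ∀ m, m ≠ m₀ → Tendsto (fun n => μ (E m n)) atTop (nhds 0) := by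
    intro m hm
    by_cases hmem : P₀ ∈ Mod m
    · -- Case 1 : P₀ ∈ Mod m, dimension penalty
      have hdm : (dm m₀ : ℝ) + 1 ≤ (dm m : ℝ) := by exact_mod_cast hdim m hm hmem
      have hupper : ∀ᶠ (n : ℕ) in atTop, μ (E m n)
          ≤ (Fintype.card X : ℝ≥0∞) * ENNReal.ofReal (Kc/(2*pm*Real.log n)) := by
        filter_upwards [eventually_ge_atTop 2] with n hn2
        have hn1R : (1:ℝ) < (n:ℝ) := by exact_mod_cast Nat.lt_of_lt_of_le Nat.one_lt_two hn2
        have hn0 : (0:ℝ) < (n:ℝ) := lt_trans one_pos hn1R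
        have hlogn : (0:ℝ) < Real.log n := Real.log_pos hn1R
        set s := Real.sqrt ((n:ℝ) * pm * Real.log n/(2*Kc)) with hsdef
        have harg : (0:ℝ) < (n:ℝ) * pm * Real.log n/(2*Kc) := by positivity
        have hs0 : 0 < s := Real.sqrt_pos.mpr harg
        have hssq : s^2 = (n:ℝ) * pm * Real.log n/(2*Kc) := Real.sq_sqrt harg.le
        have hsubset : E m n ⊆ ⋃ u ∈ Finset.univ, {ω | s ≤ |ν n ω u - n * P₀ u|} := by
          intro ω hω
          by_contra hcon
          simp only [Set.mem_iUnion, Set.mem_setOf_eq, not_exists, not_le, Finset.mem_univ,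
            exists_prop, true_and] at hcon
          have hSSm : SS m n ω ≤ (∑ u, ν n ω u * Real.log (P₀ u))
              + (∑ u, (ν n ω u - n*P₀ u)^2)/((n:ℝ)*pm) := by
            apply csSup_le (hSetNe m n ω)
            rintro y ⟨Q, hQ, rfl⟩
            obtain ⟨hQp, hQs⟩ := hdistr m Q hQ
            rw [hL n ω Q]
            have g1 := BIC.gibbs_empirical (ν n ω) (hν0 n ω) hn0 (hνsum n ω) Q hQp hQs
            have g2 := BIC.chisq_bound (ν n ω) P₀ (hν0 n ω) hpos hn0 (hνsum n ω) hsum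
            have g3 : ∑ u, (ν n ω u - (n:ℝ)*P₀ u)^2/((n:ℝ)*P₀ u)
                ≤ (∑ u, (ν n ω u - (n:ℝ)*P₀ u)^2)/((n:ℝ)*pm) := by
              rw [Finset.sum_div]
              apply Finset.sum_le_sum
              intro u _
              exact div_le_div_of_nonneg_left (sq_nonneg _) (by positivity)
                (mul_le_mul_of_nonneg_left (hpmle u) hn0.le)
            linarith
          have hωE : 2 * SS m₀ n ω - (dm m₀ : ℝ) * Real.log n
              ≤ 2 * SS m n ω - (dm m : ℝ) * Real.log n := hω
          have hSS₀ := hSSm₀ n ω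
          have hmul := mul_le_mul_of_nonneg_right hdm hlogn.le
          have h6 : Real.log n ≤ 2 * ((∑ u, (ν n ω u - n*P₀ u)^2)/((n:ℝ)*pm)) := by
            linarith
          rw [← mul_div_assoc] at h6
          have h7 := (le_div_iff₀ (by positivity : (0:ℝ) < (n:ℝ)*pm)).mp h6
          have hsumsq : (n:ℝ) * pm * Real.log n / 2 ≤ ∑ u, (ν n ω u - n*P₀ u)^2 := by
            linarith
          have hlt : ∑ u, (ν n ω u - n*P₀ u)^2
              < ∑ _u : X, ((n:ℝ) * pm * Real.log n/(2*Kc)) := by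
            apply Finset.sum_lt_sum_of_nonempty Finset.univ_nonempty
            intro u _
            have h8 := hcon u
            calc (ν n ω u - n*P₀ u)^2 = |ν n ω u - n*P₀ u|^2 := (sq_abs _).symm
              _ < s^2 := by
                apply pow_lt_pow_left₀ h8 (abs_nonneg _)
                norm_num
              _ = (n:ℝ) * pm * Real.log n/(2*Kc) := hssq
          rw [Finset.sum_const, Finset.card_univ, nsmul_eq_mul, ← hKcdef] at hlt
          have hKcne : Kc ≠ 0 := hKc0.ne'
          have heq9 : Kc * ((n:ℝ) * pm * Real.log n/(2*Kc)) = (n:ℝ) * pm * Real.log n / 2 := by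
            field_simp
          rw [heq9] at hlt
          linarith
        calc μ (E m n) ≤ ∑ u ∈ Finset.univ, μ {ω | s ≤ |ν n ω u - n * P₀ u|} :=
              (measure_mono hsubset).trans (measure_biUnion_finset_le _ _)
          _ ≤ ∑ _u ∈ (Finset.univ : Finset X), ENNReal.ofReal ((n : ℝ) / (4 * s ^ 2)) :=
              Finset.sum_le_sum fun u _ => hcheb u n hs0
          _ = (Fintype.card X : ℝ≥0∞) * ENNReal.ofReal ((n : ℝ) / (4 * s ^ 2)) := by
              rw [Finset.sum_const, Finset.card_univ, nsmul_eq_mul]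
          _ = (Fintype.card X : ℝ≥0∞) * ENNReal.ofReal (Kc/(2*pm*Real.log n)) := by
              congr 1
              rw [hssq]
              congr 1
              have hKcne : Kc ≠ 0 := hKc0.ne'
              field_simp
              ring
      have hlim : Tendsto (fun (n:ℕ) =>
          (Fintype.card X : ℝ≥0∞) * ENNReal.ofReal (Kc/(2*pm*Real.log n))) atTop (nhds 0) := by
        have hreal : Tendsto (fun (n:ℕ) => Kc/(2*pm*Real.log n)) atTop (nhds 0) := by
          have hlog : Tendsto (fun (n:ℕ) => Real.log n) atTop atTop :=
            Real.tendsto_log_atTop.comp tendsto_natCast_atTop_atTop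
          have hinv : Tendsto (fun (n:ℕ) => (Real.log n)⁻¹) atTop (nhds 0) :=
            tendsto_inv_atTop_zero.comp hlog
          have h10 := hinv.const_mul (Kc/(2*pm))
          rw [mul_zero] at h10
          have heq : (fun (n:ℕ) => Kc/(2*pm*Real.log n))
              = fun (n:ℕ) => (Kc/(2*pm)) * (Real.log n)⁻¹ := by
            funext n
            rw [← div_div, div_eq_mul_inv]
          rw [heq]
          exact h10
        have h11 := ENNReal.Tendsto.const_mul (a := (Fintype.card X : ℝ≥0∞))
          (ENNReal.tendsto_ofReal hreal) (Or.inr (ENNReal.natCast_ne_top _))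
        simpa using h11
      exact tendsto_of_tendsto_of_tendsto_of_le_of_le' tendsto_const_nhds hlim
        (Eventually.of_forall fun n => zero_le) hupper
    · -- Case 2 : P₀ ∉ Mod m
      obtain ⟨Q', hQ'Mod, c, hc, hcle⟩ := hlb m
      have hc1 : c ≤ 1 := le_trans (hcle (Classical.arbitrary X)) (hQle1 m Q' hQ'Mod _)
      have hlogc : Real.log c ≤ 0 := Real.log_nonpos hc.le hc1
      set δ := Real.exp ((2/pm) * (Real.log c + Real.log pm - 1)) with hδdef
      have hδ0 : 0 < δ := Real.exp_pos _
      have hlogδ : Real.log δ = (2/pm) * (Real.log c + Real.log pm - 1) := Real.log_exp _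
      have hlogδneg : Real.log δ ≤ 0 := by
        rw [hlogδ]
        have h2pm : (0:ℝ) < 2/pm := by positivity
        exact mul_nonpos_of_nonneg_of_nonpos h2pm.le (by linarith)
      obtain ⟨ε, hε, hklgap⟩ :=
        BIC.exists_kl_gap P₀ hpos hsum (Mod m) (hdistr m) (hparam m) hmem hδ0
      set B := 1 - Real.log δ - Real.log pm with hBdef
      have hB0 : (0:ℝ) < B := by rw [hBdef]; linarith
      set t := min (pm/2) (ε/(2*Kc*B)) with htdef
      have ht0 : 0 < t := lt_min (by positivity) (by positivity)
      set G : ℕ → Set Ω := fun n => {ω | ∀ u, |ν n ω u - n * P₀ u| ≤ n * t} with hGdef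
      -- deterministic step : eventually the bad event forces a large empirical deviation
      have hdet : ∀ᶠ (n : ℕ) in atTop, E m n ⊆ (G n)ᶜ := by
        filter_upwards [hloglt ε hε, hloglt 1 one_pos, eventually_ge_atTop 1] with n h1 h2 hn1
        intro ω hωE' hωG'
        have hωE : 2 * SS m₀ n ω - (dm m₀ : ℝ) * Real.log n
            ≤ 2 * SS m n ω - (dm m : ℝ) * Real.log n := hωE'
        have hωG : ∀ u, |ν n ω u - n * P₀ u| ≤ n * t := hωG'
        have hn0 : (0:ℝ) < (n:ℝ) := by exact_mod_cast Nat.pos_of_ne_zero (by omega)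
        have hn1R : (1:ℝ) ≤ (n:ℝ) := by exact_mod_cast hn1
        have hlogn0 : (0:ℝ) ≤ Real.log n := Real.log_nonneg hn1R
        -- counts are bounded below on the good event
        have hνlb : ∀ u, (n:ℝ) * pm / 2 ≤ ν n ω u := by
          intro u
          have ha := (abs_le.mp (hωG u)).1
          have htpm : (n:ℝ) * t ≤ (n:ℝ) * (pm/2) :=
            mul_le_mul_of_nonneg_left (min_le_left _ _) hn0.le
          have hpu : (n:ℝ) * pm ≤ (n:ℝ) * P₀ u :=
            mul_le_mul_of_nonneg_left (hpmle u) hn0.le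
          linarith
        -- bound the sup over the model
        have hQbound : ∀ Q ∈ Mod m, (∑ u, ν n ω u * Real.log (Q u))
            ≤ max ((∑ u, ν n ω u * Real.log (P₀ u)) - (n:ℝ)*ε/2)
                (((n:ℝ)*pm/2) * Real.log δ) := by
          intro Q hQ
          obtain ⟨hQp, hQs⟩ := hdistr m Q hQ
          by_cases hδQ : ∀ u, δ ≤ Q u
          · refine le_trans ?_ (le_max_left _ _)
            have hkl := hklgap Q hQ hδQ
            have hterm : ∀ u, ν n ω u * Real.log (Q u) - ν n ω u * Real.log (P₀ u)
                ≤ (n:ℝ) * P₀ u * (Real.log (Q u) - Real.log (P₀ u)) + (n:ℝ)*t*B := by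
              intro u
              have hQu1 : Q u ≤ 1 := hQle1 m Q hQ u
              have hlogQl : Real.log δ ≤ Real.log (Q u) := Real.log_le_log hδ0 (hδQ u)
              have hlogQu : Real.log (Q u) ≤ 0 := Real.log_nonpos (hQp u).le hQu1
              have hlogPl : Real.log pm ≤ Real.log (P₀ u) := Real.log_le_log hpm0 (hpmle u)
              have hlogPu : Real.log (P₀ u) ≤ 0 := Real.log_nonpos (hpos u).le (hle1 u)
              have hdiff : |Real.log (Q u) - Real.log (P₀ u)| ≤ B := by
                rw [abs_le, hBdef]
                constructor <;> linarith
              have habs := hωG u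
              have key : (ν n ω u - (n:ℝ) * P₀ u) * (Real.log (Q u) - Real.log (P₀ u))
                  ≤ (n:ℝ)*t*B := by
                calc (ν n ω u - (n:ℝ) * P₀ u) * (Real.log (Q u) - Real.log (P₀ u))
                    ≤ |(ν n ω u - (n:ℝ) * P₀ u) * (Real.log (Q u) - Real.log (P₀ u))| :=
                      le_abs_self _
                  _ = |ν n ω u - (n:ℝ) * P₀ u| * |Real.log (Q u) - Real.log (P₀ u)| :=
                      abs_mul _ _
                  _ ≤ ((n:ℝ)*t) * B := by
                      apply mul_le_mul habs hdiff (abs_nonneg _)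
                      positivity
              have heq : ν n ω u * Real.log (Q u) - ν n ω u * Real.log (P₀ u)
                  = (ν n ω u - (n:ℝ) * P₀ u) * (Real.log (Q u) - Real.log (P₀ u))
                    + (n:ℝ) * P₀ u * (Real.log (Q u) - Real.log (P₀ u)) := by ring
              linarith [heq, key]
            have hsum2 := Finset.sum_le_sum (fun u (_ : u ∈ Finset.univ) => hterm u)
            rw [Finset.sum_sub_distrib, Finset.sum_add_distrib, Finset.sum_const,
              Finset.card_univ, nsmul_eq_mul, ← hKcdef] at hsum2
            have hklsum : ∑ u, (n:ℝ) * P₀ u * (Real.log (Q u) - Real.log (P₀ u))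
                = -((n:ℝ) * ∑ u, P₀ u * (Real.log (P₀ u) - Real.log (Q u))) := by
              rw [Finset.mul_sum, ← Finset.sum_neg_distrib]
              exact Finset.sum_congr rfl fun u _ => by ring
            rw [hklsum] at hsum2
            have hklmul : (n:ℝ) * ε ≤ (n:ℝ) * ∑ u, P₀ u * (Real.log (P₀ u) - Real.log (Q u)) :=
              mul_le_mul_of_nonneg_left hkl hn0.le
            have htB : Kc * ((n:ℝ)*t*B) ≤ (n:ℝ)*ε/2 := by
              have ht2 : t ≤ ε/(2*Kc*B) := min_le_right _ _
              have h12 : Kc * ((n:ℝ)*t*B) ≤ Kc * ((n:ℝ)*(ε/(2*Kc*B))*B) := by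
                apply mul_le_mul_of_nonneg_left _ hKc0.le
                apply mul_le_mul_of_nonneg_right _ hB0.le
                exact mul_le_mul_of_nonneg_left ht2 hn0.le
              have h13 : Kc * ((n:ℝ)*(ε/(2*Kc*B))*B) = (n:ℝ)*ε/2 := by
                field_simp
              linarith
            nlinarith [hsum2, hklmul, htB]
          · refine le_trans ?_ (le_max_right _ _)
            push_neg at hδQ
            obtain ⟨u₁, hu₁⟩ := hδQ
            have hrest : ∑ u ∈ Finset.univ.erase u₁, ν n ω u * Real.log (Q u) ≤ 0 := by
              apply Finset.sum_nonpos
              intro u _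
              exact mul_nonpos_of_nonneg_of_nonpos (hν0 n ω u)
                (Real.log_nonpos (hQp u).le (hQle1 m Q hQ u))
            have hsplit : ∑ u, ν n ω u * Real.log (Q u)
                = ν n ω u₁ * Real.log (Q u₁)
                  + ∑ u ∈ Finset.univ.erase u₁, ν n ω u * Real.log (Q u) :=
              (Finset.add_sum_erase _ _ (Finset.mem_univ u₁)).symm
            have h14 : ν n ω u₁ * Real.log (Q u₁) ≤ ν n ω u₁ * Real.log δ :=
              mul_le_mul_of_nonneg_left (Real.log_le_log (hQp u₁) hu₁.le) (hν0 n ω u₁)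
            have h15 : ν n ω u₁ * Real.log δ ≤ ((n:ℝ)*pm/2) * Real.log δ :=
              mul_le_mul_of_nonpos_right (hνlb u₁) hlogδneg
            linarith
        have hSSmle : SS m n ω
            ≤ max ((∑ u, ν n ω u * Real.log (P₀ u)) - (n:ℝ)*ε/2)
                (((n:ℝ)*pm/2) * Real.log δ) := by
          apply csSup_le (hSetNe m n ω)
          rintro y ⟨Q, hQ, rfl⟩
          rw [hL n ω Q]
          exact hQbound Q hQ
        have hSS₀ := hSSm₀ n ω
        have hdmn : (0:ℝ) ≤ (dm m : ℝ) * Real.log n := by positivity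
        have hchain : (∑ u, ν n ω u * Real.log (P₀ u)) - (dm m₀ : ℝ)/2 * Real.log n
            ≤ max ((∑ u, ν n ω u * Real.log (P₀ u)) - (n:ℝ)*ε/2)
                (((n:ℝ)*pm/2) * Real.log δ) := by
          calc (∑ u, ν n ω u * Real.log (P₀ u)) - (dm m₀ : ℝ)/2 * Real.log n
              ≤ SS m n ω := by linarith
            _ ≤ _ := hSSmle
        rcases le_max_iff.mp hchain with h16 | h16
        · linarith
        · -- small-coordinate branch contradiction
          have hLP₀lb : (n:ℝ) * Real.log pm ≤ ∑ u, ν n ω u * Real.log (P₀ u) := by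
            have : ∀ u, ν n ω u * Real.log pm ≤ ν n ω u * Real.log (P₀ u) := fun u =>
              mul_le_mul_of_nonneg_left (Real.log_le_log hpm0 (hpmle u)) (hν0 n ω u)
            have h17 := Finset.sum_le_sum (fun u (_ : u ∈ Finset.univ) => this u)
            rw [← Finset.sum_mul, hνsum n ω] at h17
            exact h17
          have hδcalc : ((n:ℝ)*pm/2) * Real.log δ
              = (n:ℝ) * (Real.log c + Real.log pm - 1) := by
            rw [hlogδ]
            field_simp
          rw [hδcalc] at h16
          have hnlogc : (n:ℝ) * Real.log c ≤ 0 :=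
            mul_nonpos_of_nonneg_of_nonpos hn0.le hlogc
          have hd₀logn : (0:ℝ) ≤ (dm m₀:ℝ) * Real.log n :=
            mul_nonneg (Nat.cast_nonneg _) hlogn0
          linarith
      -- measure bound for the complement of the good event
      have hupper : ∀ᶠ (n : ℕ) in atTop, μ (E m n)
          ≤ (Fintype.card X : ℝ≥0∞) * ENNReal.ofReal ((1/(4*t^2)) * ((n:ℝ))⁻¹) := by
        filter_upwards [hdet, eventually_ge_atTop 1] with n hdetn hn1
        have hn0 : (0:ℝ) < (n:ℝ) := by exact_mod_cast Nat.pos_of_ne_zero (by omega)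
        have hnt : (0:ℝ) < (n:ℝ)*t := by positivity
        have hGsub : (G n)ᶜ ⊆ ⋃ u ∈ Finset.univ, {ω | (n:ℝ)*t ≤ |ν n ω u - n * P₀ u|} := by
          intro ω hω
          have : ¬ (∀ u, |ν n ω u - n * P₀ u| ≤ n * t) := hω
          push_neg at this
          obtain ⟨u, hu⟩ := this
          simp only [Set.mem_iUnion, Set.mem_setOf_eq, Finset.mem_univ, exists_prop, true_and]
          exact ⟨u, hu.le⟩
        calc μ (E m n) ≤ μ ((G n)ᶜ) := measure_mono hdetn
          _ ≤ ∑ u ∈ Finset.univ, μ {ω | (n:ℝ)*t ≤ |ν n ω u - n * P₀ u|} :=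
              (measure_mono hGsub).trans (measure_biUnion_finset_le _ _)
          _ ≤ ∑ _u ∈ (Finset.univ : Finset X), ENNReal.ofReal ((n:ℝ)/(4*((n:ℝ)*t)^2)) :=
              Finset.sum_le_sum fun u _ => hcheb u n hnt
          _ = (Fintype.card X : ℝ≥0∞) * ENNReal.ofReal ((n:ℝ)/(4*((n:ℝ)*t)^2)) := by
              rw [Finset.sum_const, Finset.card_univ, nsmul_eq_mul]
          _ = (Fintype.card X : ℝ≥0∞) * ENNReal.ofReal ((1/(4*t^2)) * ((n:ℝ))⁻¹) := by
              congr 1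
              congr 1
              field_simp
      have hlim : Tendsto (fun (n:ℕ) =>
          (Fintype.card X : ℝ≥0∞) * ENNReal.ofReal ((1/(4*t^2)) * ((n:ℝ))⁻¹)) atTop (nhds 0) := by
        have hinv : Tendsto (fun (n:ℕ) => ((n:ℝ))⁻¹) atTop (nhds 0) :=
          tendsto_inv_atTop_zero.comp tendsto_natCast_atTop_atTop
        have hreal := hinv.const_mul (1/(4*t^2))
        rw [mul_zero] at hreal
        have h11 := ENNReal.Tendsto.const_mul (a := (Fintype.card X : ℝ≥0∞))
          (ENNReal.tendsto_ofReal hreal) (Or.inr (ENNReal.natCast_ne_top _))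
        simpa using h11
      exact tendsto_of_tendsto_of_tendsto_of_le_of_le' tendsto_const_nhds hlim
        (Eventually.of_forall fun n => zero_le) hupper
  -- combine the per-model results
  have hsub : ∀ n, {ω | mhat n ω = m₀}ᶜ ⊆ ⋃ m ∈ Finset.univ.erase m₀, E m n := by
    intro n ω hω
    simp only [Set.mem_compl_iff, Set.mem_setOf_eq] at hω
    apply Set.mem_biUnion (Finset.mem_erase.mpr ⟨hω, Finset.mem_univ _⟩)
    exact hmhat n ω m₀
  set bnd : ℕ → ℝ≥0∞ := fun n => ∑ m' ∈ Finset.univ.erase m₀, μ (E m' n) with hbnddef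
  have hbnd0 : Tendsto bnd atTop (nhds 0) := by
    have h18 := tendsto_finset_sum (Finset.univ.erase m₀)
      (fun m' hm' => hEtendsto m' (Finset.ne_of_mem_erase hm'))
    simpa using h18
  have hlow : ∀ n, 1 - bnd n ≤ μ {ω | mhat n ω = m₀} := by
    intro n
    have h1 : (1:ℝ≥0∞) ≤ μ {ω | mhat n ω = m₀} + μ ({ω | mhat n ω = m₀}ᶜ) := by
      have := measure_union_le (μ := μ) {ω | mhat n ω = m₀} {ω | mhat n ω = m₀}ᶜ
      rwa [Set.union_compl_self, measure_univ] at this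
    have h2 : μ ({ω | mhat n ω = m₀}ᶜ) ≤ bnd n :=
      (measure_mono (hsub n)).trans (measure_biUnion_finset_le _ _)
    exact tsub_le_iff_right.mpr (h1.trans (add_le_add_right h2 _))
  have hup : ∀ n, μ {ω | mhat n ω = m₀} ≤ 1 := fun n => prob_le_one
  have hlowlim : Tendsto (fun n => (1:ℝ≥0∞) - bnd n) atTop (nhds 1) := by
    have := ENNReal.Tendsto.sub (tendsto_const_nhds :
        Tendsto (fun _ : ℕ => (1:ℝ≥0∞)) atTop (nhds 1)) hbnd0
      (Or.inl ENNReal.one_ne_top)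
    simpa using this
  exact tendsto_of_tendsto_of_tendsto_of_le_of_le hlowlim tendsto_const_nhds hlow hup
end
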